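/- Let K be a complex Hilbert space, γ a bounded operator on K with γ∘γ = −I and γ* = −γ, and let P be an orthogonal projection on K with γPγ* = I − P. For θ ∈ ℝ let P(θ,P) be the operator on K ⊕ K with block matrix [[cos²θ·P + sin²θ·(I−P), −cosθ·sinθ·I],[−cosθ·sinθ·I, cos²θ·(I−P) + sin²θ·P]], and let γ̃ = γ ⊕ (−γ). Then: (1) P(θ,P) is an orthogonal projection on K ⊕ K satisfying γ̃ P(θ,P) γ̃* = I − P(θ,P); (2) P(0,P) = P ⊕ (I−P); (3) P(π/4,P) = ½[[I, −I],[−I, I]], the orthogonal projection onto the orthogonal complement of the diagonal {(f,f) : f ∈ K}; (4) a vector ξ = (ξ₊, ξ₋) ∈ K ⊕ K lies in ker P(θ,P) if and only if cosθ·Pξ₊ = sinθ·Pξ₋ and sinθ·(I−P)ξ₊ = cosθ·(I−P)ξ₋. -/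

import Mathlib

noncomputable section

open ContinuousLinearMap

variable {K : Type*} [NormedAddCommGroup K] [InnerProductSpace ℂ K]

/-- The Hilbert direct sum `K ⊕ K`, identified with `K × K` as a set. -/
def prodE (K : Type*) [NormedAddCommGroup K] [InnerProductSpace ℂ K] :
    WithLp 2 (K × K) ≃L[ℂ] K × K :=
  WithLp.prodContinuousLinearEquiv 2 ℂ K K

/-- Transport an operator on `K × K` to the Hilbert direct sum `K ⊕ K`. -/
def toSum {K : Type*} [NormedAddCommGroup K] [InnerProductSpace ℂ K]
    (f : K × K →L[ℂ] K × K) : WithLp 2 (K × K) →L[ℂ] WithLp 2 (K × K) :=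
  ((prodE K).symm : K × K →L[ℂ] WithLp 2 (K × K)) ∘L f ∘L
    ((prodE K) : WithLp 2 (K × K) →L[ℂ] K × K)

/-- The operator on `K ⊕ K` with block matrix `[[A, B],[C, D]]`. -/
def blockOp {K : Type*} [NormedAddCommGroup K] [InnerProductSpace ℂ K]
    (A B C D : K →L[ℂ] K) : WithLp 2 (K × K) →L[ℂ] WithLp 2 (K × K) :=
  toSum ((A.coprod B).prod (C.coprod D))

/-- `γ̃ = γ ⊕ (-γ)` on `K ⊕ K`. -/
def gammaTilde (γ : K →L[ℂ] K) : WithLp 2 (K × K) →L[ℂ] WithLp 2 (K × K) :=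
  toSum (γ.prodMap (-γ))

/-- The diagonal subspace `Δ = {(f, f) : f ∈ K} ⊆ K ⊕ K`. -/
def diagSub (K : Type*) [NormedAddCommGroup K] [InnerProductSpace ℂ K] :
    Submodule ℂ (WithLp 2 (K × K)) :=
  LinearMap.range ((((prodE K).symm : K × K →L[ℂ] WithLp 2 (K × K)) ∘L
    ((ContinuousLinearMap.id ℂ K).prod (ContinuousLinearMap.id ℂ K))) : K →ₗ[ℂ] WithLp 2 (K × K))

/-- The family `P(θ,P)` on `K ⊕ K`, with block matrix
`[[cos²θ·P + sin²θ·(I-P), -cosθ·sinθ·I],[-cosθ·sinθ·I, cos²θ·(I-P) + sin²θ·P]]`. -/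
def Ptheta {K : Type*} [NormedAddCommGroup K] [InnerProductSpace ℂ K]
    (θ : ℝ) (P : K →L[ℂ] K) : WithLp 2 (K × K) →L[ℂ] WithLp 2 (K × K) :=
  blockOp
    (((Real.cos θ : ℂ) ^ 2) • P + ((Real.sin θ : ℂ) ^ 2) • (1 - P))
    (-(((Real.cos θ : ℂ) * (Real.sin θ : ℂ)) • (1 : K →L[ℂ] K)))
    (-(((Real.cos θ : ℂ) * (Real.sin θ : ℂ)) • (1 : K →L[ℂ] K)))
    (((Real.cos θ : ℂ) ^ 2) • (1 - P) + ((Real.sin θ : ℂ) ^ 2) • P)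

/-- Properties of the family `P(θ,P)`:
(1) each `P(θ,P)` is an orthogonal projection with `γ̃ P(θ,P) γ̃* = I - P(θ,P)`;
(2) `P(0,P) = P ⊕ (I-P)`;
(3) `P(π/4,P) = ½[[I,-I],[-I,I]]`, the orthogonal projection onto `Δ^⊥`;
(4) `ξ = (ξ₊,ξ₋) ∈ ker P(θ,P)` iff `cosθ·Pξ₊ = sinθ·Pξ₋` and
`sinθ·(I-P)ξ₊ = cosθ·(I-P)ξ₋`. -/
private lemma blockOp_fst' (A B C D : K →L[ℂ] K) (x : WithLp 2 (K × K)) :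
    (blockOp A B C D x).fst = A x.fst + B x.snd := rfl
private lemma blockOp_snd' (A B C D : K →L[ℂ] K) (x : WithLp 2 (K × K)) :
    (blockOp A B C D x).snd = C x.fst + D x.snd := rfl
private lemma wsub_fst (x y : WithLp 2 (K × K)) : (x - y).fst = x.fst - y.fst := rfl
private lemma wsub_snd (x y : WithLp 2 (K × K)) : (x - y).snd = x.snd - y.snd := rfl
private lemma gammaTilde_fst' (γ : K →L[ℂ] K) (x : WithLp 2 (K × K)) :
    (gammaTilde γ x).fst = γ x.fst := rfl
private lemma gammaTilde_snd' (γ : K →L[ℂ] K) (x : WithLp 2 (K × K)) :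
    (gammaTilde γ x).snd = -(γ x.snd) := rfl
private lemma toSum_prodMap_fst (f g : K →L[ℂ] K) (x : WithLp 2 (K × K)) :
    (toSum (f.prodMap g) x).fst = f x.fst := rfl
private lemma toSum_prodMap_snd (f g : K →L[ℂ] K) (x : WithLp 2 (K × K)) :
    (toSum (f.prodMap g) x).snd = g x.snd := rfl
private lemma prodE_fst' (x : WithLp 2 (K × K)) : (prodE K x).1 = x.fst := rfl
private lemma prodE_snd' (x : WithLp 2 (K × K)) : (prodE K x).2 = x.snd := rfl
private lemma prodE_symm_fst (p : K × K) : ((prodE K).symm p).fst = p.1 := rfl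
private lemma prodE_symm_snd (p : K × K) : ((prodE K).symm p).snd = p.2 := rfl

private lemma withLp_ext {x y : WithLp 2 (K × K)} (h1 : x.fst = y.fst)
    (h2 : x.snd = y.snd) : x = y := WithLp.ofLp_injective 2 (Prod.ext h1 h2)

private lemma withLp_eq_zero_iff {x : WithLp 2 (K × K)} :
    x = 0 ↔ x.fst = 0 ∧ x.snd = 0 := by
  rw [← WithLp.ofLp_eq_zero]; exact Prod.ext_iff

private lemma adjoint_blockOp [CompleteSpace K] (A B C D : K →L[ℂ] K) :
    adjoint (blockOp A B C D) = blockOp (adjoint A) (adjoint C) (adjoint B) (adjoint D) := by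
  symm
  rw [eq_adjoint_iff]
  intro x y
  show (inner ℂ _ _ : ℂ) = _
  simp only [WithLp.prod_inner_apply]
  show inner ℂ (adjoint A x.fst + adjoint C x.snd) y.fst
      + inner ℂ (adjoint B x.fst + adjoint D x.snd) y.snd
    = inner ℂ x.fst (A y.fst + B y.snd) + inner ℂ x.snd (C y.fst + D y.snd)
  simp only [inner_add_left, inner_add_right, adjoint_inner_left]
  ring

private lemma gammaTilde_eq (γ : K →L[ℂ] K) : gammaTilde γ = blockOp γ 0 0 (-γ) := by
  apply ContinuousLinearMap.ext; intro x
  apply withLp_ext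
  · rw [gammaTilde_fst', blockOp_fst']; simp
  · rw [gammaTilde_snd', blockOp_snd']; simp

private lemma clm_one_apply (v : K) : (1 : K →L[ℂ] K) v = v := rfl

private lemma hcs (θ : ℝ) : ((Real.cos θ : ℂ)) ^ 2 + ((Real.sin θ : ℂ)) ^ 2 = 1 := by
  norm_cast
  exact Real.cos_sq_add_sin_sq θ

theorem statement7 [CompleteSpace K] (γ : K →L[ℂ] K)
    (hsq : γ ∘L γ = -1) (hadj : adjoint γ = -γ)
    (P : K →L[ℂ] K) (hPsa : IsSelfAdjoint P) (hPidem : P ∘L P = P)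
    (hPlag : γ ∘L P ∘L adjoint γ = 1 - P) :
    (∀ θ : ℝ,
      IsSelfAdjoint (Ptheta θ P) ∧ (Ptheta θ P) ∘L (Ptheta θ P) = Ptheta θ P ∧
      gammaTilde γ ∘L Ptheta θ P ∘L adjoint (gammaTilde γ) = 1 - Ptheta θ P) ∧
    (Ptheta 0 P = toSum (P.prodMap (1 - P))) ∧
    (Ptheta (Real.pi / 4) P =
        blockOp ((2⁻¹ : ℂ) • 1) (-((2⁻¹ : ℂ) • 1)) (-((2⁻¹ : ℂ) • 1)) ((2⁻¹ : ℂ) • 1) ∧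
      ∀ x : WithLp 2 (K × K),
        Ptheta (Real.pi / 4) P x ∈ (diagSub K)ᗮ ∧
        x - Ptheta (Real.pi / 4) P x ∈ ((diagSub K)ᗮ)ᗮ) ∧
    (∀ (θ : ℝ) (ξ : WithLp 2 (K × K)),
      Ptheta θ P ξ = 0 ↔
        ((Real.cos θ : ℂ) • P ((prodE K ξ).1) = (Real.sin θ : ℂ) • P ((prodE K ξ).2) ∧
         (Real.sin θ : ℂ) • ((prodE K ξ).1 - P ((prodE K ξ).1)) =
           (Real.cos θ : ℂ) • ((prodE K ξ).2 - P ((prodE K ξ).2)))) := by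
  have hPP : ∀ v : K, P (P v) = P v := fun v => congrFun (congrArg DFunLike.coe hPidem) v
  have hγγ : ∀ v : K, γ (γ v) = -v := fun v => by
    have := congrFun (congrArg DFunLike.coe hsq) v
    simpa using this
  have hγPγ : ∀ v : K, γ (P (γ v)) = P v - v := by
    intro v
    rw [hadj] at hPlag
    have := congrFun (congrArg DFunLike.coe hPlag) v
    simp only [comp_apply, neg_apply, map_neg, sub_apply, clm_one_apply] at this
    linear_combination (norm := module) -this
  have hc2 : ∀ t : ℝ, Complex.cos (t:ℂ) ^ 2 + Complex.sin (t:ℂ) ^ 2 = 1 := fun t => by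
    linear_combination Complex.sin_sq_add_cos_sq (t:ℂ)
  have hGadj : adjoint (gammaTilde γ) = blockOp (-γ) 0 0 γ := by
    rw [gammaTilde_eq, adjoint_blockOp, hadj]
    have h0 : adjoint (0 : K →L[ℂ] K) = 0 := by rw [← star_eq_adjoint, star_zero]
    rw [h0]
    have : adjoint (-γ) = γ := by
      rw [← star_eq_adjoint, star_neg, star_eq_adjoint, hadj, neg_neg]
    rw [this]
  refine ⟨fun θ => ⟨?_, ?_, ?_⟩, ?_, ⟨?_, ?_⟩, ?_⟩
  · -- self-adjoint
    rw [ContinuousLinearMap.isSelfAdjoint_iff']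
    rw [Ptheta, adjoint_blockOp]
    have hA : adjoint (((Real.cos θ : ℂ) ^ 2) • P + ((Real.sin θ : ℂ) ^ 2) • (1 - P))
        = ((Real.cos θ : ℂ) ^ 2) • P + ((Real.sin θ : ℂ) ^ 2) • (1 - P) := by
      rw [← star_eq_adjoint]
      simp only [star_add, star_smul, star_sub, star_one, hPsa.star_eq, Complex.star_def,
        map_pow, Complex.conj_ofReal]
    have hB : adjoint (-(((Real.cos θ : ℂ) * (Real.sin θ : ℂ)) • (1 : K →L[ℂ] K)))
        = -(((Real.cos θ : ℂ) * (Real.sin θ : ℂ)) • (1 : K →L[ℂ] K)) := by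
      rw [← star_eq_adjoint]
      simp only [star_neg, star_smul, star_one, Complex.star_def, map_mul, Complex.conj_ofReal]
    have hD : adjoint (((Real.cos θ : ℂ) ^ 2) • (1 - P) + ((Real.sin θ : ℂ) ^ 2) • P)
        = ((Real.cos θ : ℂ) ^ 2) • (1 - P) + ((Real.sin θ : ℂ) ^ 2) • P := by
      rw [← star_eq_adjoint]
      simp only [star_add, star_smul, star_sub, star_one, hPsa.star_eq, Complex.star_def,
        map_pow, Complex.conj_ofReal]
    rw [hA, hB, hD]
  · -- idempotent
    apply ContinuousLinearMap.ext; intro x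
    apply withLp_ext <;>
    · simp only [comp_apply, Ptheta, blockOp_fst', blockOp_snd', add_apply, smul_apply,
        sub_apply, clm_one_apply, neg_apply, map_add, map_smul, map_sub, map_neg, hPP]
      match_scalars <;> push_cast <;>
      first
        | ring1
        | linear_combination (Complex.cos (θ:ℂ)^2) * hc2 θ
        | linear_combination (-(Complex.cos (θ:ℂ)^2)) * hc2 θ
        | linear_combination (Complex.sin (θ:ℂ)^2) * hc2 θ
        | linear_combination (-(Complex.sin (θ:ℂ)^2)) * hc2 θ
        | linear_combination hc2 θ
        | linear_combination (-1 : ℂ) * hc2 θ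
        | linear_combination (Complex.cos (θ:ℂ)^2 - Complex.sin (θ:ℂ)^2) * hc2 θ
        | linear_combination (Complex.sin (θ:ℂ)^2 - Complex.cos (θ:ℂ)^2) * hc2 θ
        | linear_combination (Complex.cos (θ:ℂ) * Complex.sin (θ:ℂ)) * hc2 θ
        | linear_combination (-(Complex.cos (θ:ℂ) * Complex.sin (θ:ℂ))) * hc2 θ
  · -- conjugation
    rw [hGadj]
    apply ContinuousLinearMap.ext; intro x
    apply withLp_ext <;>
    · simp only [comp_apply, sub_apply, clm_one_apply, wsub_fst, wsub_snd,
        gammaTilde_fst', gammaTilde_snd', Ptheta, blockOp_fst', blockOp_snd', add_apply,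
        smul_apply, neg_apply, zero_apply, map_add, map_smul, map_sub, map_neg,
        add_zero, zero_add, hγγ, hγPγ, hPP]
      match_scalars <;> push_cast <;>
      first
        | ring1
        | linear_combination (Complex.cos (θ:ℂ)^2) * hc2 θ
        | linear_combination (-(Complex.cos (θ:ℂ)^2)) * hc2 θ
        | linear_combination (Complex.sin (θ:ℂ)^2) * hc2 θ
        | linear_combination (-(Complex.sin (θ:ℂ)^2)) * hc2 θ
        | linear_combination hc2 θ
        | linear_combination (-1 : ℂ) * hc2 θ
        | linear_combination (Complex.cos (θ:ℂ)^2 - Complex.sin (θ:ℂ)^2) * hc2 θ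
        | linear_combination (Complex.sin (θ:ℂ)^2 - Complex.cos (θ:ℂ)^2) * hc2 θ
        | linear_combination (Complex.cos (θ:ℂ) * Complex.sin (θ:ℂ)) * hc2 θ
        | linear_combination (-(Complex.cos (θ:ℂ) * Complex.sin (θ:ℂ))) * hc2 θ
  · -- θ = 0
    apply ContinuousLinearMap.ext; intro x
    apply withLp_ext
    · simp only [Ptheta, blockOp_fst', toSum_prodMap_fst, Real.cos_zero, Real.sin_zero,
        Complex.ofReal_one, Complex.ofReal_zero, add_apply, smul_apply, sub_apply,
        clm_one_apply, neg_apply]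
      match_scalars <;> ring1
    · simp only [Ptheta, blockOp_snd', toSum_prodMap_snd, Real.cos_zero, Real.sin_zero,
        Complex.ofReal_one, Complex.ofReal_zero, add_apply, smul_apply, sub_apply,
        clm_one_apply, neg_apply]
      match_scalars <;> ring1
  · -- θ = π/4 block form
    have h2 : ((Real.sqrt 2 : ℝ) : ℂ) ^ 2 = 2 := by
      rw [← Complex.ofReal_pow, Real.sq_sqrt (by norm_num : (0:ℝ) ≤ 2)]
      norm_num
    apply ContinuousLinearMap.ext; intro x
    apply withLp_ext <;>
    · simp only [Ptheta, blockOp_fst', blockOp_snd', Real.cos_pi_div_four, Real.sin_pi_div_four,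
        add_apply, smul_apply, sub_apply, clm_one_apply, neg_apply, Complex.ofReal_div]
      match_scalars <;>
      first
        | ring1
        | linear_combination h2 / 4
        | linear_combination (-(1:ℂ)/4) * h2
  · -- orthogonality statements
    have hhalf : Ptheta (Real.pi / 4) P =
        blockOp ((2⁻¹ : ℂ) • 1) (-((2⁻¹ : ℂ) • 1)) (-((2⁻¹ : ℂ) • 1)) ((2⁻¹ : ℂ) • 1) := by
      have h2 : ((Real.sqrt 2 : ℝ) : ℂ) ^ 2 = 2 := by
        rw [← Complex.ofReal_pow, Real.sq_sqrt (by norm_num : (0:ℝ) ≤ 2)]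
        norm_num
      apply ContinuousLinearMap.ext; intro x
      apply withLp_ext <;>
      · simp only [Ptheta, blockOp_fst', blockOp_snd', Real.cos_pi_div_four,
          Real.sin_pi_div_four, add_apply, smul_apply, sub_apply, clm_one_apply, neg_apply,
          Complex.ofReal_div]
        match_scalars <;>
        first
          | ring1
          | linear_combination h2 / 4
          | linear_combination (-(1:ℂ)/4) * h2
    intro x
    constructor
    · rw [Submodule.mem_orthogonal]
      intro u hu
      obtain ⟨f, rfl⟩ := hu
      rw [hhalf]
      show (inner ℂ _ _ : ℂ) = 0
      rw [WithLp.prod_inner_apply]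
      show (inner ℂ f ((2⁻¹ : ℂ) • x.fst + -((2⁻¹ : ℂ) • x.snd)) : ℂ)
          + inner ℂ f (-((2⁻¹ : ℂ) • x.fst) + (2⁻¹ : ℂ) • x.snd) = 0
      simp only [inner_add_right, inner_neg_right, inner_smul_right]
      ring
    · apply Submodule.le_orthogonal_orthogonal
      refine ⟨(2⁻¹ : ℂ) • (x.fst + x.snd), ?_⟩
      apply withLp_ext
      · show (2⁻¹ : ℂ) • (x.fst + x.snd) = (x - Ptheta (Real.pi / 4) P x).fst
        rw [hhalf, wsub_fst, blockOp_fst']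
        simp only [smul_apply, clm_one_apply, neg_apply]
        module
      · show (2⁻¹ : ℂ) • (x.fst + x.snd) = (x - Ptheta (Real.pi / 4) P x).snd
        rw [hhalf, wsub_snd, blockOp_snd']
        simp only [smul_apply, clm_one_apply, neg_apply]
        module
  · -- kernel
    intro θ ξ
    rw [withLp_eq_zero_iff]
    simp only [Ptheta, blockOp_fst', blockOp_snd', add_apply, smul_apply, sub_apply,
      clm_one_apply, neg_apply, prodE_fst', prodE_snd']
    constructor
    · rintro ⟨h1, h2⟩
      have h1P := congrArg P h1
      have h2P := congrArg P h2
      simp only [map_add, map_smul, map_sub, map_neg, map_zero, hPP] at h1P h2P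
      have h1Q : ((Real.sin θ : ℂ)^2) • (ξ.fst - P ξ.fst)
          - ((Real.cos θ : ℂ) * (Real.sin θ : ℂ)) • (ξ.snd - P ξ.snd) = 0 := by
        linear_combination (norm := module) h1 - h1P
      have h2Q : ((Real.cos θ : ℂ)^2) • (ξ.snd - P ξ.snd)
          - ((Real.cos θ : ℂ) * (Real.sin θ : ℂ)) • (ξ.fst - P ξ.fst) = 0 := by
        linear_combination (norm := module) h2 - h2P
      constructor
      · set w := (Real.cos θ : ℂ) • P ξ.fst - (Real.sin θ : ℂ) • P ξ.snd with hw
        have e1 : (Real.cos θ : ℂ) • w = 0 := by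
          rw [hw]; linear_combination (norm := module) h1P
        have e2 : (Real.sin θ : ℂ) • w = 0 := by
          rw [hw]; linear_combination (norm := module) -h2P
        have : w = 0 := by
          calc w = (((Real.cos θ : ℂ))^2 + ((Real.sin θ : ℂ))^2) • w := by
                rw [hcs θ, one_smul]
          _ = (Real.cos θ : ℂ) • ((Real.cos θ : ℂ) • w)
              + (Real.sin θ : ℂ) • ((Real.sin θ : ℂ) • w) := by module
          _ = 0 := by rw [e1, e2, smul_zero, smul_zero, add_zero]
        linear_combination (norm := module) this
      · set w := (Real.sin θ : ℂ) • (ξ.fst - P ξ.fst) - (Real.cos θ : ℂ) • (ξ.snd - P ξ.snd)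
          with hw
        have e1 : (Real.sin θ : ℂ) • w = 0 := by
          rw [hw]; linear_combination (norm := module) h1Q
        have e2 : (Real.cos θ : ℂ) • w = 0 := by
          rw [hw]; linear_combination (norm := module) -h2Q
        have : w = 0 := by
          calc w = (((Real.cos θ : ℂ))^2 + ((Real.sin θ : ℂ))^2) • w := by
                rw [hcs θ, one_smul]
          _ = (Real.cos θ : ℂ) • ((Real.cos θ : ℂ) • w)
              + (Real.sin θ : ℂ) • ((Real.sin θ : ℂ) • w) := by module
          _ = 0 := by rw [e1, e2, smul_zero, smul_zero, add_zero]
        linear_combination (norm := module) this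
    · rintro ⟨h1, h2⟩
      constructor
      · linear_combination (norm := module)
          (Real.cos θ : ℂ) • h1 + (Real.sin θ : ℂ) • h2
      · linear_combination (norm := module)
          (-(Real.sin θ : ℂ)) • h1 + (-(Real.cos θ : ℂ)) • h2
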